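/- Let ε, η ∈ (0,∞), α ∈ [0,1), β ∈ (α², 1), c, M₀ ∈ [0,∞), m ∈ ℝ, and let G: ℕ → ℝ, κ: ℕ → (0,∞), γ: ℕ → [0,∞), Θ: ℕ₀ → ℝ satisfy for all k ≥ 1: Θ_k = Θ_{k−1} − γ_k·(αᵏm + Σ_{j=1}^{k}(1−α)α^{k−j}G_j) / (ε + (βᵏM₀ + Σ_{j=1}^{k} κ_k β^{k−j}G_j²)^{1/2}). Suppose n ∈ ℕ and S ∈ [0,∞) satisfy βⁿM₀ + Σ_{j=1}^{n} κ_n β^{n−j}G_j² = S² and |Θ_{n−1}| ≤ c + η⁻¹|G_n|. Then |Θ_n| ≤ c + S/(η·κ_n^{1/2}) + γ_n αⁿ|m|/(ε + S) + γ_n(1−α)β^{1/2}/(κ_n^{1/2}(β − α²)^{1/2}). -/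

import Mathlib

theorem stmt18 (ε η : ℝ) (hε : 0 < ε) (hη : 0 < η)
    (α : ℝ) (hα : α ∈ Set.Ico (0 : ℝ) 1) (β : ℝ) (hβ : β ∈ Set.Ioo (α ^ 2) 1)
    (c M₀ : ℝ) (hc : 0 ≤ c) (hM₀ : 0 ≤ M₀) (m : ℝ)
    (G : ℕ → ℝ) (κ : ℕ → ℝ) (hκ : ∀ k, 0 < κ k)
    (γ : ℕ → ℝ) (hγ : ∀ k, 0 ≤ γ k) (Θ : ℕ → ℝ)
    (hrec : ∀ k, 1 ≤ k → Θ k = Θ (k - 1) -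
      (γ k * (α ^ k * m + ∑ j ∈ Finset.Icc 1 k, (1 - α) * α ^ (k - j) * G j)) /
        (ε + Real.sqrt (β ^ k * M₀ + ∑ j ∈ Finset.Icc 1 k, κ k * β ^ (k - j) * (G j) ^ 2)))
    (n : ℕ) (hn : 1 ≤ n) (S : ℝ) (hS : 0 ≤ S)
    (hS2 : β ^ n * M₀ + ∑ j ∈ Finset.Icc 1 n, κ n * β ^ (n - j) * (G j) ^ 2 = S ^ 2)
    (hΘ : |Θ (n - 1)| ≤ c + η⁻¹ * |G n|) :
    |Θ n| ≤ c + S / (η * Real.sqrt (κ n)) + γ n * α ^ n * |m| / (ε + S) +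
      γ n * (1 - α) * Real.sqrt β / (Real.sqrt (κ n) * Real.sqrt (β - α ^ 2)) := by
  obtain ⟨hα0, hα1⟩ := hα
  obtain ⟨hβα, hβ1⟩ := hβ
  have hβ0 : 0 < β := lt_of_le_of_lt (sq_nonneg α) hβα
  have hκn := hκ n
  have hκs : 0 < Real.sqrt (κ n) := Real.sqrt_pos.mpr hκn
  have hεS : 0 < ε + S := by positivity
  have hβM : 0 ≤ β ^ n * M₀ := by positivity
  -- the sum of squares is bounded by S²/κ n
  have hsumsq : ∑ j ∈ Finset.Icc 1 n, β ^ (n - j) * G j ^ 2 ≤ S ^ 2 / κ n := by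
    rw [le_div_iff₀ hκn]
    calc (∑ j ∈ Finset.Icc 1 n, β ^ (n - j) * G j ^ 2) * κ n
        = ∑ j ∈ Finset.Icc 1 n, κ n * β ^ (n - j) * G j ^ 2 := by
          rw [Finset.sum_mul]; apply Finset.sum_congr rfl; intro j _; ring
      _ ≤ S ^ 2 := by linarith [hS2]
  -- bound on |G n|
  have hGn2 : κ n * G n ^ 2 ≤ S ^ 2 := by
    have hmem : n ∈ Finset.Icc 1 n := Finset.mem_Icc.mpr ⟨hn, le_rfl⟩
    have h1 := Finset.single_le_sum (f := fun j => κ n * β ^ (n - j) * G j ^ 2)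
      (fun j _ => by positivity) hmem
    simp only [Nat.sub_self, pow_zero, mul_one] at h1
    linarith [hS2]
  have hGn : Real.sqrt (κ n) * |G n| ≤ S := by
    have h2 : Real.sqrt (κ n * G n ^ 2) ≤ Real.sqrt (S ^ 2) := Real.sqrt_le_sqrt hGn2
    rwa [Real.sqrt_mul hκn.le, Real.sqrt_sq_eq_abs, Real.sqrt_sq hS] at h2
  have hGnabs : |G n| ≤ S / Real.sqrt (κ n) :=
    (le_div_iff₀ hκs).mpr (by rw [mul_comm]; exact hGn)
  have hGnb : η⁻¹ * |G n| ≤ S / (η * Real.sqrt (κ n)) := by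
    calc η⁻¹ * |G n| ≤ η⁻¹ * (S / Real.sqrt (κ n)) := by
          apply mul_le_mul_of_nonneg_left hGnabs (by positivity)
      _ = S / (η * Real.sqrt (κ n)) := by
          rw [inv_mul_eq_div, div_div, mul_comm (Real.sqrt (κ n)) η]
  -- Cauchy-Schwarz bound on T
  set T := ∑ j ∈ Finset.Icc 1 n, α ^ (n - j) * |G j| with hT
  have hT0 : 0 ≤ T := Finset.sum_nonneg fun j _ => by positivity
  have hgeom : ∑ j ∈ Finset.Icc 1 n, (α ^ 2 / β) ^ (n - j) ≤ β / (β - α ^ 2) := by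
    have hre : ∑ j ∈ Finset.Icc 1 n, (α ^ 2 / β) ^ (n - j)
        = ∑ i ∈ Finset.range n, (α ^ 2 / β) ^ i := by
      rw [show Finset.Icc 1 n = Finset.Ico 1 (n+1) by rfl, Finset.sum_Ico_eq_sum_range]
      simp only [Nat.add_sub_cancel]
      rw [← Finset.sum_range_reflect (fun i => (α ^ 2 / β) ^ i) n]
      exact Finset.sum_congr rfl fun i hi => by congr 1; omega
    rw [hre]
    set r := α ^ 2 / β with hr
    have hr0 : 0 ≤ r := div_nonneg (sq_nonneg α) hβ0.le
    have hr1 : r < 1 := (div_lt_one hβ0).mpr hβα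
    have hrn0 : 0 ≤ r ^ n := pow_nonneg hr0 n
    have hrn1 : r ^ n ≤ 1 := pow_le_one₀ hr0 hr1.le
    have hsum : ∑ i ∈ Finset.range n, r ^ i = (1 - r ^ n) / (1 - r) := by
      rw [geom_sum_eq hr1.ne, div_eq_div_iff (by linarith : r - 1 ≠ 0) (by linarith : (1:ℝ) - r ≠ 0)]
      ring
    rw [hsum, div_le_div_iff₀ (by linarith) (by linarith [hβα])]
    have hrkey : β * (1 - r) = β - α ^ 2 := by rw [hr, mul_sub, mul_one, mul_div_cancel₀ (α ^ 2) hβ0.ne']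
    nlinarith [mul_nonneg hβ0.le (sub_nonneg.mpr hrn1)]
  have hCS : T ^ 2 ≤ (β / (β - α ^ 2)) * (S ^ 2 / κ n) := by
    have key := Finset.sum_mul_sq_le_sq_mul_sq (Finset.Icc 1 n)
      (fun j => Real.sqrt ((α ^ 2 / β) ^ (n - j)))
      (fun j => Real.sqrt (β ^ (n - j)) * |G j|)
    have heq : ∀ j ∈ Finset.Icc 1 n,
        Real.sqrt ((α ^ 2 / β) ^ (n - j)) * (Real.sqrt (β ^ (n - j)) * |G j|)
        = α ^ (n - j) * |G j| := by
      intro j _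
      rw [← mul_assoc, ← Real.sqrt_mul (pow_nonneg (div_nonneg (sq_nonneg α) hβ0.le) (n - j))]
      congr 1
      rw [div_pow, div_mul_eq_mul_div, mul_div_assoc, div_self (by positivity), mul_one,
        ← pow_mul, mul_comm 2 (n - j), pow_mul, Real.sqrt_sq (by positivity)]
    rw [Finset.sum_congr rfl heq] at key
    have hsq1 : ∀ j ∈ Finset.Icc 1 n,
        Real.sqrt ((α ^ 2 / β) ^ (n - j)) ^ 2 = (α ^ 2 / β) ^ (n - j) := fun j _ =>
      Real.sq_sqrt (pow_nonneg (div_nonneg (sq_nonneg α) hβ0.le) (n - j))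
    have hsq2 : ∀ j ∈ Finset.Icc 1 n,
        (Real.sqrt (β ^ (n - j)) * |G j|) ^ 2 = β ^ (n - j) * G j ^ 2 := by
      intro j _
      rw [mul_pow, Real.sq_sqrt (by positivity), sq_abs]
    rw [Finset.sum_congr rfl hsq1, Finset.sum_congr rfl hsq2] at key
    calc T ^ 2 ≤ (∑ j ∈ Finset.Icc 1 n, (α ^ 2 / β) ^ (n - j)) *
          ∑ j ∈ Finset.Icc 1 n, β ^ (n - j) * G j ^ 2 := key
      _ ≤ (β / (β - α ^ 2)) * (S ^ 2 / κ n) := by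
          exact mul_le_mul hgeom hsumsq (Finset.sum_nonneg fun j _ => by positivity)
            (div_nonneg hβ0.le (by linarith))
  have hTb : T ≤ Real.sqrt β / Real.sqrt (β - α ^ 2) * (S / Real.sqrt (κ n)) := by
    have h3 : T ≤ Real.sqrt ((β / (β - α ^ 2)) * (S ^ 2 / κ n)) := by
      rw [← Real.sqrt_sq hT0]
      exact Real.sqrt_le_sqrt hCS
    calc T ≤ Real.sqrt ((β / (β - α ^ 2)) * (S ^ 2 / κ n)) := h3
      _ = Real.sqrt β / Real.sqrt (β - α ^ 2) * (S / Real.sqrt (κ n)) := by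
          rw [Real.sqrt_mul (div_nonneg hβ0.le (by linarith : (0:ℝ) ≤ β - α ^ 2)), Real.sqrt_div' β (by linarith [hβα] : (0:ℝ) ≤ β - α ^ 2),
            Real.sqrt_div (sq_nonneg S), Real.sqrt_sq hS]
  -- rewrite the recursion at n
  have hsqrtS : Real.sqrt (β ^ n * M₀ + ∑ j ∈ Finset.Icc 1 n, κ n * β ^ (n - j) * (G j) ^ 2)
      = S := by rw [hS2, Real.sqrt_sq hS]
  have hrecn := hrec n hn
  rw [hsqrtS] at hrecn
  -- bound the numerator
  have hnum : |α ^ n * m + ∑ j ∈ Finset.Icc 1 n, (1 - α) * α ^ (n - j) * G j|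
      ≤ α ^ n * |m| + (1 - α) * T := by
    calc |α ^ n * m + ∑ j ∈ Finset.Icc 1 n, (1 - α) * α ^ (n - j) * G j|
        ≤ |α ^ n * m| + |∑ j ∈ Finset.Icc 1 n, (1 - α) * α ^ (n - j) * G j| := abs_add_le _ _
      _ ≤ α ^ n * |m| + (1 - α) * T := by
          gcongr
          · rw [abs_mul, abs_of_nonneg (by positivity)]
          · calc |∑ j ∈ Finset.Icc 1 n, (1 - α) * α ^ (n - j) * G j|
                ≤ ∑ j ∈ Finset.Icc 1 n, |(1 - α) * α ^ (n - j) * G j| :=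
                  Finset.abs_sum_le_sum_abs _ _
              _ = (1 - α) * T := by
                  rw [hT, Finset.mul_sum]
                  apply Finset.sum_congr rfl
                  intro j _
                  rw [abs_mul, abs_mul, abs_of_nonneg (by linarith : (0:ℝ) ≤ 1 - α),
                    abs_of_nonneg (by positivity : (0:ℝ) ≤ α ^ (n - j))]
                  ring
  -- assemble
  have hmain : |Θ n| ≤ |Θ (n - 1)| +
      γ n * (α ^ n * |m| + (1 - α) * T) / (ε + S) := by
    rw [hrecn]
    calc |Θ (n - 1) - γ n * (α ^ n * m + ∑ j ∈ Finset.Icc 1 n, (1 - α) * α ^ (n - j) * G j) / (ε + S)|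
        ≤ |Θ (n - 1)| + |γ n * (α ^ n * m + ∑ j ∈ Finset.Icc 1 n, (1 - α) * α ^ (n - j) * G j) / (ε + S)| :=
          abs_sub _ _
      _ ≤ |Θ (n - 1)| + γ n * (α ^ n * |m| + (1 - α) * T) / (ε + S) := by
          gcongr
          rw [abs_div, abs_of_pos hεS, abs_mul, abs_of_nonneg (hγ n)]
          exact (div_le_div_iff_of_pos_right hεS).mpr (mul_le_mul_of_nonneg_left hnum (hγ n))
  have hbs : 0 < Real.sqrt (β - α ^ 2) := Real.sqrt_pos.mpr (by linarith)
  have hγn := hγ n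
  have h1α : (0:ℝ) ≤ 1 - α := by linarith
  have hsplit : γ n * (α ^ n * |m| + (1 - α) * T) / (ε + S)
      ≤ γ n * α ^ n * |m| / (ε + S) +
        γ n * (1 - α) * Real.sqrt β / (Real.sqrt (κ n) * Real.sqrt (β - α ^ 2)) := by
    have h6 : γ n * ((1 - α) * T) / (ε + S)
        ≤ γ n * (1 - α) * Real.sqrt β / (Real.sqrt (κ n) * Real.sqrt (β - α ^ 2)) := by
      have h5 : γ n * ((1 - α) * T) / (ε + S)
          ≤ γ n * ((1 - α) * (Real.sqrt β / Real.sqrt (β - α ^ 2) * (S / Real.sqrt (κ n)))) / (ε + S) :=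
        (div_le_div_iff_of_pos_right hεS).mpr (mul_le_mul_of_nonneg_left
          (mul_le_mul_of_nonneg_left hTb h1α) hγn)
      refine h5.trans ?_
      have hfin : γ n * ((1 - α) * (Real.sqrt β / Real.sqrt (β - α ^ 2) * (S / Real.sqrt (κ n)))) / (ε + S)
          = γ n * (1 - α) * Real.sqrt β / (Real.sqrt (κ n) * Real.sqrt (β - α ^ 2)) * (S / (ε + S)) := by
        field_simp
      rw [hfin]
      have hnn : 0 ≤ γ n * (1 - α) * Real.sqrt β / (Real.sqrt (κ n) * Real.sqrt (β - α ^ 2)) :=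
        div_nonneg (mul_nonneg (mul_nonneg hγn h1α) (Real.sqrt_nonneg β))
          (mul_nonneg hκs.le hbs.le)
      have hSle : S / (ε + S) ≤ 1 := by rw [div_le_one hεS]; linarith
      exact mul_le_of_le_one_right hnn hSle
    calc γ n * (α ^ n * |m| + (1 - α) * T) / (ε + S)
        = γ n * α ^ n * |m| / (ε + S) + γ n * ((1 - α) * T) / (ε + S) := by ring
      _ ≤ _ := add_le_add le_rfl h6
  calc |Θ n| ≤ |Θ (n - 1)| + γ n * (α ^ n * |m| + (1 - α) * T) / (ε + S) := hmain
    _ ≤ (c + η⁻¹ * |G n|) + (γ n * α ^ n * |m| / (ε + S) +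
        γ n * (1 - α) * Real.sqrt β / (Real.sqrt (κ n) * Real.sqrt (β - α ^ 2))) :=
      add_le_add hΘ hsplit
    _ ≤ _ := by linarith [hGnb]
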